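/- arXiv:1808.08156 — 2 statements merged into one kernel-verified Lean document; each statement's English description precedes it below -/
import Mathlib

section
/- Let (Ω, 𝒜, μ) be a finite measure space, 0 < p ≤ 1, and f ∈ L_p(Ω) supported on a set Ω' ∈ 𝒜 with μ(Ω') ≤ μ(Ω)/2. Then for every constant ξ ∈ ℝ, ‖f − ξ‖_{L_p(Ω)} ≥ ‖f‖_{L_p(Ω)}; that is, the best approximation of f by constants in the L_p quasi-norm is attained at ξ = 0. -/
open MeasureTheory
open scoped NNReal

lemma real_rpow_add_le {x y p : ℝ} (hx : 0 ≤ x) (hy : 0 ≤ y) (hp : 0 ≤ p) (hp1 : p ≤ 1) :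
    (x + y) ^ p ≤ x ^ p + y ^ p := by
  have h := NNReal.rpow_add_le_add_rpow (⟨x, hx⟩ : ℝ≥0) ⟨y, hy⟩ hp hp1
  have := NNReal.coe_le_coe.2 h
  exact this

/-- Best approximation by constants in `L_p`, `0 < p ≤ 1`: if `f` is supported on a set
`Ω'` of measure at most half the total measure, then for every constant `ξ`,
`‖f - ξ‖_{L_p} ≥ ‖f‖_{L_p}` (stated in terms of the `p`-th power integrals). -/
theorem stmt0 {Ω : Type*} [MeasurableSpace Ω] (μ : Measure Ω) [IsFiniteMeasure μ]
    (p : ℝ) (hp0 : 0 < p) (hp1 : p ≤ 1)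
    (f : Ω → ℝ) (Ω' : Set Ω) (hΩ' : MeasurableSet Ω')
    (hμ : μ Ω' ≤ μ Set.univ / 2)
    (hsupp : ∀ᵐ x ∂μ, x ∉ Ω' → f x = 0) :
    ∀ ξ : ℝ,
      (∫⁻ x, ENNReal.ofReal (|f x| ^ p) ∂μ) ≤ ∫⁻ x, ENNReal.ofReal (|f x - ξ| ^ p) ∂μ := by
  intro ξ
  -- μ Ω' ≤ μ Ω'ᶜ
  have hμc : μ Ω' ≤ μ Ω'ᶜ := by
    have htot : μ Ω' + μ Ω'ᶜ = μ Set.univ := measure_add_measure_compl hΩ'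
    have h2 : 2 * μ Ω' ≤ μ Set.univ := by
      rwa [ENNReal.le_div_iff_mul_le (by norm_num) (by norm_num), mul_comm] at hμ
    rw [two_mul, ← htot] at h2
    exact (ENNReal.add_le_add_iff_left (measure_ne_top μ Ω')).mp h2
  -- on Ω'ᶜ, f = 0 a.e.
  have hzero : ∫⁻ x in Ω'ᶜ, ENNReal.ofReal (|f x| ^ p) ∂μ = 0 := by
    have h : ∀ᵐ x ∂μ.restrict Ω'ᶜ, ENNReal.ofReal (|f x| ^ p) = 0 := by
      filter_upwards [ae_restrict_of_ae hsupp, ae_restrict_mem hΩ'.compl] with x h1 h2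
      rw [h1 h2]
      simp [Real.zero_rpow hp0.ne']
    rw [lintegral_congr_ae h, lintegral_zero]
  have hconst : ∫⁻ x in Ω'ᶜ, ENNReal.ofReal (|f x - ξ| ^ p) ∂μ
      = ENNReal.ofReal (|ξ| ^ p) * μ Ω'ᶜ := by
    have h : ∀ᵐ x ∂μ.restrict Ω'ᶜ,
        ENNReal.ofReal (|f x - ξ| ^ p) = ENNReal.ofReal (|ξ| ^ p) := by
      filter_upwards [ae_restrict_of_ae hsupp, ae_restrict_mem hΩ'.compl] with x h1 h2
      rw [h1 h2]
      simp
    rw [lintegral_congr_ae h, setLIntegral_const]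
  -- pointwise bound
  have hpt : ∀ x, ENNReal.ofReal (|f x| ^ p)
      ≤ ENNReal.ofReal (|f x - ξ| ^ p) + ENNReal.ofReal (|ξ| ^ p) := by
    intro x
    have h1 : |f x| ≤ |f x - ξ| + |ξ| := by
      calc |f x| = |(f x - ξ) + ξ| := by ring_nf
        _ ≤ |f x - ξ| + |ξ| := abs_add_le _ _
    have h2 : |f x| ^ p ≤ (|f x - ξ| + |ξ|) ^ p :=
      Real.rpow_le_rpow (abs_nonneg _) h1 hp0.le
    have h3 : (|f x - ξ| + |ξ|) ^ p ≤ |f x - ξ| ^ p + |ξ| ^ p :=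
      real_rpow_add_le (abs_nonneg _) (abs_nonneg _) hp0.le hp1
    calc ENNReal.ofReal (|f x| ^ p)
        ≤ ENNReal.ofReal (|f x - ξ| ^ p + |ξ| ^ p) :=
          ENNReal.ofReal_le_ofReal (h2.trans h3)
      _ ≤ _ := ENNReal.ofReal_add_le
  calc ∫⁻ x, ENNReal.ofReal (|f x| ^ p) ∂μ
      = ∫⁻ x in Ω', ENNReal.ofReal (|f x| ^ p) ∂μ := by
        rw [← lintegral_add_compl (fun x => ENNReal.ofReal (|f x| ^ p)) hΩ', hzero, add_zero]
    _ ≤ ∫⁻ x in Ω', (ENNReal.ofReal (|f x - ξ| ^ p) + ENNReal.ofReal (|ξ| ^ p)) ∂μ :=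
        lintegral_mono fun x => hpt x
    _ = (∫⁻ x in Ω', ENNReal.ofReal (|f x - ξ| ^ p) ∂μ) + ENNReal.ofReal (|ξ| ^ p) * μ Ω' := by
        rw [lintegral_add_right _ measurable_const, setLIntegral_const]
    _ ≤ (∫⁻ x in Ω', ENNReal.ofReal (|f x - ξ| ^ p) ∂μ) + ENNReal.ofReal (|ξ| ^ p) * μ Ω'ᶜ :=
        add_le_add le_rfl (mul_le_mul_right hμc _)
    _ = (∫⁻ x in Ω', ENNReal.ofReal (|f x - ξ| ^ p) ∂μ)
        + ∫⁻ x in Ω'ᶜ, ENNReal.ofReal (|f x - ξ| ^ p) ∂μ := by rw [hconst]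
    _ = ∫⁻ x, ENNReal.ofReal (|f x - ξ| ^ p) ∂μ :=
        lintegral_add_compl (fun x => ENNReal.ofReal (|f x - ξ| ^ p)) hΩ'
end

section
/- Let d ≥ 1, 0 < p < 1, 0 < q < ∞, and 0 < s < d(1/p − 1). Suppose F is a linear functional on the span of characteristic functions of dyadic cubes in [0,1]^d satisfying |F(χ_Δ)| ≤ C·‖χ_Δ‖_{𝐀^s_{p,q,1}} ≤ C'·2^{k(s−d/p)} for all dyadic cubes Δ of side 2^{−k} and all k. Then F(χ_Δ) = 0 for every dyadic cube Δ. -/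
open MeasureTheory

noncomputable section

/-- The half-open dyadic cube of side `2^{-k}` in `ℝ^d` with multi-index `i`. -/
def dyadicCube (d k : ℕ) (i : Fin d → ℕ) : Set (Fin d → ℝ) :=
  {x | ∀ m, (i m : ℝ) / 2 ^ k ≤ x m ∧ x m < ((i m : ℝ) + 1) / 2 ^ k}

lemma mem_dyadic_iff (d k : ℕ) (i : Fin d → ℕ) (x : Fin d → ℝ) :
    x ∈ dyadicCube d k i ↔ ∀ m, (i m : ℝ) ≤ x m * 2 ^ k ∧ x m * 2 ^ k < (i m : ℝ) + 1 := by
  have h : (0:ℝ) < 2 ^ k := by positivity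
  unfold dyadicCube
  simp only [Set.mem_setOf_eq, div_le_iff₀ h, lt_div_iff₀ h]

lemma indicator_decomp (d k : ℕ) (i : Fin d → ℕ) :
    (dyadicCube d k i).indicator (1 : (Fin d → ℝ) → ℝ) =
    ∑ j : Fin d → Fin 2,
      (dyadicCube d (k+1) (fun m => 2 * i m + (j m : ℕ))).indicator 1 := by
  have key : ∀ (j : Fin d → Fin 2) (x : Fin d → ℝ),
      x ∈ dyadicCube d (k+1) (fun m => 2 * i m + (j m : ℕ)) ↔
      (x ∈ dyadicCube d k i ∧ ∀ m,
        (j m : ℕ) = if x m * 2 ^ (k+1) < 2 * (i m : ℝ) + 1 then 0 else 1) := by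
    intro j x
    rw [mem_dyadic_iff, mem_dyadic_iff]
    constructor
    · intro H
      have hjle : ∀ m, (j m : ℕ) ≤ 1 := fun m => Nat.lt_succ_iff.mp (j m).is_lt
      constructor
      · intro m
        obtain ⟨a, b⟩ := H m
        have hj1 : ((j m : ℕ) : ℝ) ≤ 1 := by exact_mod_cast hjle m
        have hj0 : (0:ℝ) ≤ ((j m : ℕ) : ℝ) := Nat.cast_nonneg _
        push_cast at a b
        rw [pow_succ] at a b
        constructor <;> nlinarith
      · intro m
        obtain ⟨a, b⟩ := H m
        push_cast at a b
        by_cases hc : x m * 2 ^ (k+1) < 2 * (i m : ℝ) + 1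
        · have h1 : ((j m : ℕ) : ℝ) < 1 := by linarith
          have h2 : (j m : ℕ) < 1 := by exact_mod_cast h1
          have h3 : (j m : ℕ) = 0 := by omega
          simp [hc, h3]
        · rw [if_neg hc]
          push_neg at hc
          have h3 : (0:ℝ) < ((j m : ℕ) : ℝ) := by linarith
          have h4 : (0:ℕ) < (j m : ℕ) := by exact_mod_cast h3
          have := hjle m
          omega
    · rintro ⟨H, Hj⟩ m
      obtain ⟨a, b⟩ := H m
      have hjm := Hj m
      by_cases hc : x m * 2 ^ (k+1) < 2 * (i m : ℝ) + 1
      · simp only [hc, if_true] at hjm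
        rw [hjm]
        push_cast
        rw [pow_succ] at hc ⊢
        constructor <;> nlinarith
      · simp only [hc, if_false] at hjm
        rw [hjm]
        push_neg at hc
        push_cast
        rw [pow_succ] at hc ⊢
        constructor <;> nlinarith
  funext x
  by_cases hx : x ∈ dyadicCube d k i
  · rw [Set.indicator_of_mem hx, Pi.one_apply, Finset.sum_apply]
    set j0 : Fin d → Fin 2 := fun m =>
      if x m * 2 ^ (k+1) < 2 * (i m : ℝ) + 1 then 0 else 1 with hj0def
    have hxj0 : x ∈ dyadicCube d (k+1) (fun m => 2 * i m + ((j0 m : ℕ))) := by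
      rw [key]
      refine ⟨hx, fun m => ?_⟩
      by_cases hc : x m * 2 ^ (k+1) < 2 * (i m : ℝ) + 1 <;> simp [hj0def, hc]
    rw [Finset.sum_eq_single j0]
    · rw [Set.indicator_of_mem hxj0, Pi.one_apply]
    · intro j _ hj
      apply Set.indicator_of_notMem
      intro hxj
      apply hj
      rw [key] at hxj hxj0
      funext m
      exact Fin.ext ((hxj.2 m).trans (hxj0.2 m).symm)
    · intro h; exact absurd (Finset.mem_univ j0) h
  · rw [Set.indicator_of_notMem hx, Finset.sum_apply]
    symm
    apply Finset.sum_eq_zero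
    intro j _
    refine Set.indicator_of_notMem (fun h => hx ?_) _
    exact ((key j x).mp h).1

/-- Triviality of the dual in the range `0 < s < d(1/p-1)`: a linear functional `F` on
functions on `ℝ^d` which satisfies `|F(χ_Δ)| ≤ C'·2^{k(s-d/p)}` for all dyadic cubes `Δ`
of side `2^{-k}` in `[0,1]^d` must vanish on all such characteristic functions. -/
theorem stmt8 (d : ℕ) (hd : 1 ≤ d) (p q s : ℝ) (hp0 : 0 < p) (hp1 : p < 1)
    (hq0 : 0 < q) (hs0 : 0 < s) (hs : s < d * (1 / p - 1))
    (F : ((Fin d → ℝ) → ℝ) →ₗ[ℝ] ℝ) (C' : ℝ)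
    (hF : ∀ (k : ℕ) (i : Fin d → ℕ), (∀ m, i m < 2 ^ k) →
      |F ((dyadicCube d k i).indicator 1)| ≤ C' * (2:ℝ) ^ ((k : ℝ) * (s - d / p))) :
    ∀ (k : ℕ) (i : Fin d → ℕ), (∀ m, i m < 2 ^ k) →
      F ((dyadicCube d k i).indicator 1) = 0 := by
  set r : ℝ := (2:ℝ) ^ ((d : ℝ) + (s - (d:ℝ) / p)) with hr
  have hr0 : 0 < r := Real.rpow_pos_of_pos (by norm_num) _
  have hexp : (d : ℝ) + (s - (d:ℝ) / p) < 0 := by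
    have : s < (d:ℝ) / p - d := by
      rw [mul_sub, mul_one_div] at hs; linarith
    linarith
  have hr1 : r < 1 := by
    rw [hr]
    calc (2:ℝ) ^ ((d : ℝ) + (s - (d:ℝ) / p)) < 2 ^ (0:ℝ) := by
          apply Real.rpow_lt_rpow_of_exponent_lt (by norm_num) hexp
      _ = 1 := Real.rpow_zero 2
  have key : ∀ (l k : ℕ) (i : Fin d → ℕ), (∀ m, i m < 2 ^ k) →
      |F ((dyadicCube d k i).indicator 1)| ≤
        C' * (2:ℝ) ^ ((k : ℝ) * (s - (d:ℝ) / p)) * r ^ l := by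
    intro l
    induction l with
    | zero => intro k i hi; simpa using hF k i hi
    | succ l ih =>
      intro k i hi
      rw [indicator_decomp, map_sum]
      have hchild : ∀ j : Fin d → Fin 2,
          |F ((dyadicCube d (k+1) (fun m => 2 * i m + (j m : ℕ))).indicator 1)| ≤
            C' * (2:ℝ) ^ (((k:ℝ)+1) * (s - (d:ℝ) / p)) * r ^ l := by
        intro j
        have := ih (k+1) (fun m => 2 * i m + (j m : ℕ)) (fun m => by
          have h1 := hi m
          have h2 : (j m : ℕ) ≤ 1 := Nat.lt_succ_iff.mp (j m).is_lt
          have : 2 * i m + (j m : ℕ) < 2 * 2 ^ k := by omega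
          simpa [pow_succ, mul_comm] using this)
        simpa [Nat.cast_succ] using this
      calc |∑ j : Fin d → Fin 2,
              F ((dyadicCube d (k+1) (fun m => 2 * i m + (j m : ℕ))).indicator 1)|
          ≤ ∑ j : Fin d → Fin 2,
              |F ((dyadicCube d (k+1) (fun m => 2 * i m + (j m : ℕ))).indicator 1)| :=
            Finset.abs_sum_le_sum_abs _ _
        _ ≤ ∑ _j : Fin d → Fin 2,
              C' * (2:ℝ) ^ (((k:ℝ)+1) * (s - (d:ℝ) / p)) * r ^ l :=
            Finset.sum_le_sum (fun j _ => hchild j)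
        _ = (2:ℝ)^d * (C' * (2:ℝ) ^ (((k:ℝ)+1) * (s - (d:ℝ) / p)) * r ^ l) := by
            rw [Finset.sum_const, Finset.card_univ, Fintype.card_fun]
            simp [Fintype.card_fin]
        _ = C' * (2:ℝ) ^ ((k : ℝ) * (s - (d:ℝ) / p)) * r ^ (l+1) := by
            rw [hr, pow_succ]
            rw [Real.rpow_add (by norm_num : (0:ℝ) < 2)]
            rw [add_mul, one_mul, Real.rpow_add (by norm_num : (0:ℝ) < 2)]
            rw [Real.rpow_natCast]
            ring
  intro k i hi
  have hlim : Filter.Tendsto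
      (fun l : ℕ => C' * (2:ℝ) ^ ((k : ℝ) * (s - (d:ℝ) / p)) * r ^ l)
      Filter.atTop (nhds 0) := by
    have := tendsto_pow_atTop_nhds_zero_of_lt_one hr0.le hr1
    simpa using this.const_mul (C' * (2:ℝ) ^ ((k : ℝ) * (s - (d:ℝ) / p)))
  have hle : |F ((dyadicCube d k i).indicator 1)| ≤ 0 :=
    ge_of_tendsto' hlim (fun l => key l k i hi)
  have := abs_nonneg (F ((dyadicCube d k i).indicator 1))
  have habs : |F ((dyadicCube d k i).indicator 1)| = 0 := le_antisymm hle this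
  exact abs_eq_zero.mp habs
end
end
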